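/- Let L : ℝ × ℝⁿ × ℝⁿ → ℝ be C² (in (t,q,v)), α : ℝ × ℝⁿ → ℝ be C¹ in x, and β : ℝ → ℝ continuous. Define the functional 𝓘[x] = ∫₀ᵀ L(t, x(t), x'(t)) dt − G(∫₀ᵀ α(t, x(t)) dt) where G' = β. If x* is a C² critical point of 𝓘 among C² paths with fixed endpoints x(0) = x₀ and x(T) = x_f, then x* satisfies the memory Euler–Lagrange equation d/dt(∂L/∂v) − ∂L/∂q = −𝒦 · ∂α/∂x(t, x*(t)) with constant 𝒦 = β(∫₀ᵀ α(τ, x*(τ)) dτ). -/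

import Mathlib

open MeasureTheory intervalIntegral

open MeasureTheory intervalIntegral Metric Set InnerProductSpace
open scoped RealInnerProductSpace

section MELhelpers

lemma MEL.param_hasDerivAt {T : ℝ} (F F' : ℝ → ℝ → ℝ)
    (hFc : Continuous fun p : ℝ × ℝ => F p.1 p.2)
    (hF'c : Continuous fun p : ℝ × ℝ => F' p.1 p.2)
    (hdiff : ∀ ε t, HasDerivAt (fun e => F e t) (F' ε t) ε) :
    HasDerivAt (fun ε => ∫ t in (0:ℝ)..T, F ε t) (∫ t in (0:ℝ)..T, F' 0 t) 0 := by
  have hK : IsCompact (Icc (-1:ℝ) 1 ×ˢ uIcc (0:ℝ) T) :=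
    isCompact_Icc.prod isCompact_uIcc
  obtain ⟨C, hC⟩ := hK.exists_bound_of_continuousOn hF'c.continuousOn
  refine (intervalIntegral.hasDerivAt_integral_of_dominated_loc_of_deriv_le
    (F := F) (F' := F') (bound := fun _ => C) (ball_mem_nhds 0 one_pos) ?_ ?_ ?_ ?_ ?_ ?_).2
  · filter_upwards with e
    exact (hFc.comp (continuous_const.prodMk continuous_id)).aestronglyMeasurable
  · exact ((hFc.comp (continuous_const.prodMk continuous_id)).intervalIntegrable _ _)
  · exact (hF'c.comp (continuous_const.prodMk continuous_id)).aestronglyMeasurable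
  · filter_upwards with t ht e he
    have : (e, t) ∈ Icc (-1:ℝ) 1 ×ˢ uIcc (0:ℝ) T := by
      constructor
      · have := mem_ball_iff_norm.mp he
        simp only [sub_zero, Real.norm_eq_abs] at this
        exact ⟨by linarith [neg_abs_le e], by linarith [le_abs_self e]⟩
      · exact uIoc_subset_uIcc ht
    simpa using hC _ this
  · exact intervalIntegrable_const
  · filter_upwards with t ht e he
    exact hdiff e t

lemma MEL.fund_lemma {n : ℕ} {T : ℝ} (hT : 0 < T) (E : ℝ → EuclideanSpace ℝ (Fin n))
    (hE : Continuous E)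
    (hint : ∀ h : ℝ → EuclideanSpace ℝ (Fin n), ContDiff ℝ 2 h → h 0 = 0 → h T = 0 →
      ∫ t in (0:ℝ)..T, ⟪E t, h t⟫ = 0) :
    ∀ t ∈ Set.Icc (0:ℝ) T, E t = 0 := by
  have hIoo : ∀ t ∈ Set.Ioo (0:ℝ) T, E t = 0 := by
    intro t₀ ht₀
    by_contra hne
    set c := E t₀ with hc
    have hg : Continuous fun t => ⟪E t, c⟫ := (hE.inner continuous_const)
    have hgpos : 0 < ⟪E t₀, c⟫ := by
      rw [real_inner_self_eq_norm_sq]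
      exact pow_pos (norm_pos_iff.mpr hne) 2
    have hopen : IsOpen (Set.Ioo (0:ℝ) T ∩ {t | 0 < ⟪E t, c⟫}) :=
      isOpen_Ioo.inter (isOpen_lt continuous_const hg)
    obtain ⟨δ, hδpos, hδ⟩ := Metric.isOpen_iff.mp hopen t₀ ⟨ht₀, hgpos⟩
    set f : ContDiffBump t₀ := ⟨δ/2, δ*3/4, by positivity, by linarith⟩ with hf
    have hball : ball t₀ f.rOut ⊆ Set.Ioo (0:ℝ) T ∩ {t | 0 < ⟪E t, c⟫} :=
      (ball_subset_ball (by rw [hf]; dsimp; linarith)).trans hδ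
    have hf0 : ∀ s, s ∉ ball t₀ f.rOut → f s = 0 := fun s hs =>
      f.zero_of_le_dist (le_of_not_gt (by simpa [mem_ball] using hs))
    set h : ℝ → EuclideanSpace ℝ (Fin n) := fun t => f t • c with hh
    have hh2 : ContDiff ℝ 2 h := (f.contDiff (n := 2)).smul contDiff_const
    have h0 : h 0 = 0 := by
      rw [hh]; dsimp
      rw [hf0 0 (fun habs => (hball habs).1.1.ne rfl), zero_smul]
    have hTz : h T = 0 := by
      rw [hh]; dsimp
      rw [hf0 T (fun habs => (hball habs).1.2.ne rfl), zero_smul]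
    have hmain := hint h hh2 h0 hTz
    set φ : ℝ → ℝ := fun t => f t * ⟪E t, c⟫ with hφ
    have hφc : Continuous φ := f.continuous.mul hg
    have hφeq : ∀ t, ⟪E t, h t⟫ = φ t := fun t => real_inner_smul_right (E t) c (f t)
    have hφnonneg : ∀ t, 0 ≤ φ t := by
      intro t
      by_cases hmem : t ∈ ball t₀ f.rOut
      · exact le_of_lt (mul_pos (f.pos_of_mem_ball hmem) (hball hmem).2)
      · rw [hφ]; dsimp; rw [hf0 t hmem, zero_mul]
    set a := t₀ - δ/4 with ha
    set b := t₀ + δ/4 with hb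
    have hmem : ∀ s, s ∈ Set.Icc a b → s ∈ ball t₀ f.rOut := by
      intro s hs
      rw [mem_ball, Real.dist_eq, abs_sub_lt_iff, hf]
      dsimp
      constructor <;> [skip; skip] <;>
        · rcases hs with ⟨h1, h2⟩; rw [ha] at h1; rw [hb] at h2; linarith
    have h0a : 0 < a := (hball (hmem a ⟨le_refl a, by rw [ha, hb]; linarith⟩)).1.1
    have hbT : b < T := (hball (hmem b ⟨by rw [ha, hb]; linarith, le_refl b⟩)).1.2
    have hab : a < b := by rw [ha, hb]; linarith
    have hi1 : IntervalIntegrable φ volume 0 a := hφc.intervalIntegrable _ _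
    have hi2 : IntervalIntegrable φ volume a b := hφc.intervalIntegrable _ _
    have hi3 : IntervalIntegrable φ volume b T := hφc.intervalIntegrable _ _
    have hsplit : (∫ t in (0:ℝ)..a, φ t) + (∫ t in a..b, φ t) + (∫ t in b..T, φ t)
        = ∫ t in (0:ℝ)..T, φ t := by
      rw [intervalIntegral.integral_add_adjacent_intervals hi1 hi2,
        intervalIntegral.integral_add_adjacent_intervals (hi1.trans hi2) hi3]
    have hZ : (∫ t in (0:ℝ)..T, φ t) = 0 := by
      have heq : (∫ t in (0:ℝ)..T, φ t) = ∫ t in (0:ℝ)..T, ⟪E t, h t⟫ :=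
        intervalIntegral.integral_congr fun t _ => (hφeq t).symm
      rw [heq]; exact hmain
    have hpos2 : 0 < ∫ t in a..b, φ t := by
      refine intervalIntegral_pos_of_pos_on hi2 (fun s hs => ?_) hab
      have hsball : s ∈ ball t₀ f.rOut := hmem s (Set.Ioo_subset_Icc_self hs)
      exact mul_pos (f.pos_of_mem_ball hsball) (hball hsball).2
    have hnn1 : 0 ≤ ∫ t in (0:ℝ)..a, φ t :=
      intervalIntegral.integral_nonneg h0a.le (fun u _ => hφnonneg u)
    have hnn3 : 0 ≤ ∫ t in b..T, φ t :=
      intervalIntegral.integral_nonneg hbT.le (fun u _ => hφnonneg u)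
    linarith
  intro t ht
  have hclos : Set.Icc (0:ℝ) T = closure (Set.Ioo 0 T) := (closure_Ioo hT.ne).symm
  have htmem : t ∈ closure (Set.Ioo (0:ℝ) T) := hclos ▸ ht
  have hsub : Set.Ioo (0:ℝ) T ⊆ E ⁻¹' {0} := fun s hs => hIoo s hs
  have hcl : IsClosed (E ⁻¹' {0}) := isClosed_singleton.preimage hE
  exact hcl.closure_subset ((closure_mono hsub) htmem)

namespace MEL

variable {n : ℕ}

noncomputable def Jq (n : ℕ) : EuclideanSpace ℝ (Fin n) →L[ℝ]
    ℝ × EuclideanSpace ℝ (Fin n) × EuclideanSpace ℝ (Fin n) :=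
  (0 : EuclideanSpace ℝ (Fin n) →L[ℝ] ℝ).prod
    ((ContinuousLinearMap.id ℝ _).prod 0)

noncomputable def Jv (n : ℕ) : EuclideanSpace ℝ (Fin n) →L[ℝ]
    ℝ × EuclideanSpace ℝ (Fin n) × EuclideanSpace ℝ (Fin n) :=
  (0 : EuclideanSpace ℝ (Fin n) →L[ℝ] ℝ).prod
    ((0 : EuclideanSpace ℝ (Fin n) →L[ℝ] EuclideanSpace ℝ (Fin n)).prod
      (ContinuousLinearMap.id ℝ _))

variable (L : ℝ → EuclideanSpace ℝ (Fin n) → EuclideanSpace ℝ (Fin n) → ℝ)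
variable (Lq Lv : ℝ → EuclideanSpace ℝ (Fin n) → EuclideanSpace ℝ (Fin n) → EuclideanSpace ℝ (Fin n))

lemma grad_q
    (hL : ContDiff ℝ 2 fun p : ℝ × EuclideanSpace ℝ (Fin n) × EuclideanSpace ℝ (Fin n) =>
      L p.1 p.2.1 p.2.2)
    (hLq : ∀ t q v, HasGradientAt (fun q' => L t q' v) (Lq t q v) q) :
    ∀ p : ℝ × EuclideanSpace ℝ (Fin n) × EuclideanSpace ℝ (Fin n),
      ((fderiv ℝ (fun p : ℝ × EuclideanSpace ℝ (Fin n) × EuclideanSpace ℝ (Fin n) =>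
        L p.1 p.2.1 p.2.2) p).comp (Jq n)) = toDual ℝ _ (Lq p.1 p.2.1 p.2.2) := by
  rintro ⟨t, q, v⟩
  have hd := ((hL.differentiable two_ne_zero) (t, q, v)).hasFDerivAt
  have hcurve : HasFDerivAt
      (fun q' : EuclideanSpace ℝ (Fin n) =>
        ((t, q', v) : ℝ × EuclideanSpace ℝ (Fin n) × EuclideanSpace ℝ (Fin n)))
      (Jq n) q :=
    (hasFDerivAt_const t q).prodMk ((hasFDerivAt_id q).prodMk (hasFDerivAt_const v q))
  have hc := hd.comp q hcurve; exact hc.unique (hLq t q v).hasFDerivAt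

lemma grad_v
    (hL : ContDiff ℝ 2 fun p : ℝ × EuclideanSpace ℝ (Fin n) × EuclideanSpace ℝ (Fin n) =>
      L p.1 p.2.1 p.2.2)
    (hLv : ∀ t q v, HasGradientAt (fun v' => L t q v') (Lv t q v) v) :
    ∀ p : ℝ × EuclideanSpace ℝ (Fin n) × EuclideanSpace ℝ (Fin n),
      ((fderiv ℝ (fun p : ℝ × EuclideanSpace ℝ (Fin n) × EuclideanSpace ℝ (Fin n) =>
        L p.1 p.2.1 p.2.2) p).comp (Jv n)) = toDual ℝ _ (Lv p.1 p.2.1 p.2.2) := by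
  rintro ⟨t, q, v⟩
  have hd := ((hL.differentiable two_ne_zero) (t, q, v)).hasFDerivAt
  have hcurve : HasFDerivAt
      (fun v' : EuclideanSpace ℝ (Fin n) =>
        ((t, q, v') : ℝ × EuclideanSpace ℝ (Fin n) × EuclideanSpace ℝ (Fin n)))
      (Jv n) v :=
    (hasFDerivAt_const t v).prodMk ((hasFDerivAt_const q v).prodMk (hasFDerivAt_id v))
  have hc := hd.comp v hcurve; exact hc.unique (hLv t q v).hasFDerivAt

lemma hasDerivAt_L_dir
    (hL : ContDiff ℝ 2 fun p : ℝ × EuclideanSpace ℝ (Fin n) × EuclideanSpace ℝ (Fin n) =>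
      L p.1 p.2.1 p.2.2)
    (hLq : ∀ t q v, HasGradientAt (fun q' => L t q' v) (Lq t q v) q)
    (hLv : ∀ t q v, HasGradientAt (fun v' => L t q v') (Lv t q v) v)
    (t : ℝ) (q v a b : EuclideanSpace ℝ (Fin n)) (ε : ℝ) :
    HasDerivAt (fun e : ℝ => L t (q + e • a) (v + e • b))
      (⟪Lq t (q + ε • a) (v + ε • b), a⟫ + ⟪Lv t (q + ε • a) (v + ε • b), b⟫) ε := by
  set p : ℝ × EuclideanSpace ℝ (Fin n) × EuclideanSpace ℝ (Fin n) := (t, q + ε • a, v + ε • b)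
  have hd := ((hL.differentiable two_ne_zero) p).hasFDerivAt
  have hcurve : HasDerivAt (fun e : ℝ =>
      ((t, q + e • a, v + e • b) : ℝ × EuclideanSpace ℝ (Fin n) × EuclideanSpace ℝ (Fin n)))
      (((0:ℝ), a, b)) ε := by
    refine (hasDerivAt_const ε t).prodMk (HasDerivAt.prodMk ?_ ?_)
    · simpa using ((hasDerivAt_id ε).smul_const a).const_add q
    · simpa using ((hasDerivAt_id ε).smul_const b).const_add v
  have hcomp := hd.comp_hasDerivAt ε hcurve
  have key : (fderiv ℝ (fun p : ℝ × EuclideanSpace ℝ (Fin n) × EuclideanSpace ℝ (Fin n) =>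
      L p.1 p.2.1 p.2.2) p) ((0:ℝ), a, b)
      = ⟪Lq t (q + ε • a) (v + ε • b), a⟫ + ⟪Lv t (q + ε • a) (v + ε • b), b⟫ := by
    have hsplit : (((0:ℝ), a, b) : ℝ × EuclideanSpace ℝ (Fin n) × EuclideanSpace ℝ (Fin n))
        = Jq n a + Jv n b := by
      simp [Jq, Jv, Prod.ext_iff]
    rw [hsplit, map_add]
    have h1 := congrFun (congrArg DFunLike.coe (grad_q L Lq hL hLq p)) a
    have h2 := congrFun (congrArg DFunLike.coe (grad_v L Lv hL hLv p)) b
    simp only [ContinuousLinearMap.coe_comp', Function.comp_apply] at h1 h2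
    rw [h1, h2, toDual_apply_apply, toDual_apply_apply]
  rw [key] at hcomp
  exact hcomp

noncomputable def gradq : ℝ × EuclideanSpace ℝ (Fin n) × EuclideanSpace ℝ (Fin n) →
    EuclideanSpace ℝ (Fin n) := fun p =>
  (toDual ℝ (EuclideanSpace ℝ (Fin n))).symm
    ((fderiv ℝ (fun p : ℝ × EuclideanSpace ℝ (Fin n) × EuclideanSpace ℝ (Fin n) =>
      L p.1 p.2.1 p.2.2) p).comp (Jq n))

noncomputable def gradv : ℝ × EuclideanSpace ℝ (Fin n) × EuclideanSpace ℝ (Fin n) →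
    EuclideanSpace ℝ (Fin n) := fun p =>
  (toDual ℝ (EuclideanSpace ℝ (Fin n))).symm
    ((fderiv ℝ (fun p : ℝ × EuclideanSpace ℝ (Fin n) × EuclideanSpace ℝ (Fin n) =>
      L p.1 p.2.1 p.2.2) p).comp (Jv n))

lemma gradq_eq
    (hL : ContDiff ℝ 2 fun p : ℝ × EuclideanSpace ℝ (Fin n) × EuclideanSpace ℝ (Fin n) =>
      L p.1 p.2.1 p.2.2)
    (hLq : ∀ t q v, HasGradientAt (fun q' => L t q' v) (Lq t q v) q)
    (t : ℝ) (q v : EuclideanSpace ℝ (Fin n)) :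
    Lq t q v = gradq L (t, q, v) := by
  rw [gradq, grad_q L Lq hL hLq (t, q, v)]
  simp

lemma gradv_eq
    (hL : ContDiff ℝ 2 fun p : ℝ × EuclideanSpace ℝ (Fin n) × EuclideanSpace ℝ (Fin n) =>
      L p.1 p.2.1 p.2.2)
    (hLv : ∀ t q v, HasGradientAt (fun v' => L t q v') (Lv t q v) v)
    (t : ℝ) (q v : EuclideanSpace ℝ (Fin n)) :
    Lv t q v = gradv L (t, q, v) := by
  rw [gradv, grad_v L Lv hL hLv (t, q, v)]
  simp

lemma contDiff_gradq
    (hL : ContDiff ℝ 2 fun p : ℝ × EuclideanSpace ℝ (Fin n) × EuclideanSpace ℝ (Fin n) =>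
      L p.1 p.2.1 p.2.2) :
    ContDiff ℝ 1 (gradq L) := by
  have h1 : ContDiff ℝ 1 (fderiv ℝ (fun p : ℝ × EuclideanSpace ℝ (Fin n) ×
      EuclideanSpace ℝ (Fin n) => L p.1 p.2.1 p.2.2)) :=
    hL.fderiv_right (by norm_num)
  exact ((toDual ℝ (EuclideanSpace ℝ (Fin n))).symm.contDiff).comp
    ((((ContinuousLinearMap.compL ℝ (EuclideanSpace ℝ (Fin n))
      (ℝ × EuclideanSpace ℝ (Fin n) × EuclideanSpace ℝ (Fin n)) ℝ).flip
        (Jq n)).contDiff).comp h1)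

lemma contDiff_gradv
    (hL : ContDiff ℝ 2 fun p : ℝ × EuclideanSpace ℝ (Fin n) × EuclideanSpace ℝ (Fin n) =>
      L p.1 p.2.1 p.2.2) :
    ContDiff ℝ 1 (gradv L) := by
  have h1 : ContDiff ℝ 1 (fderiv ℝ (fun p : ℝ × EuclideanSpace ℝ (Fin n) ×
      EuclideanSpace ℝ (Fin n) => L p.1 p.2.1 p.2.2)) :=
    hL.fderiv_right (by norm_num)
  exact ((toDual ℝ (EuclideanSpace ℝ (Fin n))).symm.contDiff).comp
    ((((ContinuousLinearMap.compL ℝ (EuclideanSpace ℝ (Fin n))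
      (ℝ × EuclideanSpace ℝ (Fin n) × EuclideanSpace ℝ (Fin n)) ℝ).flip
        (Jv n)).contDiff).comp h1)

end MEL

end MELhelpers

/-- Main result: a critical point of the risk-adjusted information functional
`𝓘[x] = ∫₀ᵀ L(t, x, x') dt − G(∫₀ᵀ α(t, x) dt)` with fixed endpoints satisfies
the memory Euler–Lagrange equation
`d/dt(∂L/∂v) − ∂L/∂q = −𝒦 ∂α/∂x` with `𝒦 = β(∫₀ᵀ α(τ, x(τ)) dτ)`. -/
theorem memory_euler_lagrange (n : ℕ) (T : ℝ) (hT : 0 < T)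
    (L : ℝ → EuclideanSpace ℝ (Fin n) → EuclideanSpace ℝ (Fin n) → ℝ)
    (hL : ContDiff ℝ 2 fun p : ℝ × EuclideanSpace ℝ (Fin n) × EuclideanSpace ℝ (Fin n) =>
      L p.1 p.2.1 p.2.2)
    (Lq Lv : ℝ → EuclideanSpace ℝ (Fin n) → EuclideanSpace ℝ (Fin n) → EuclideanSpace ℝ (Fin n))
    (hLq : ∀ t q v, HasGradientAt (fun q' => L t q' v) (Lq t q v) q)
    (hLv : ∀ t q v, HasGradientAt (fun v' => L t q v') (Lv t q v) v)
    (α : ℝ → EuclideanSpace ℝ (Fin n) → ℝ)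
    (αx : ℝ → EuclideanSpace ℝ (Fin n) → EuclideanSpace ℝ (Fin n))
    (hαgrad : ∀ t q, HasGradientAt (α t) (αx t q) q)
    (hαcont : Continuous fun p : ℝ × EuclideanSpace ℝ (Fin n) => α p.1 p.2)
    (hαxcont : Continuous fun p : ℝ × EuclideanSpace ℝ (Fin n) => αx p.1 p.2)
    (β : ℝ → ℝ) (hβ : Continuous β)
    (G : ℝ → ℝ) (hG : ∀ z, HasDerivAt G (β z) z)
    (x₀ xf : EuclideanSpace ℝ (Fin n))
    (x : ℝ → EuclideanSpace ℝ (Fin n)) (hx : ContDiff ℝ 2 x)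
    (hbc0 : x 0 = x₀) (hbcT : x T = xf)
    (hcrit : ∀ h : ℝ → EuclideanSpace ℝ (Fin n), ContDiff ℝ 2 h →
      h 0 = 0 → h T = 0 →
      HasDerivAt (fun ε : ℝ =>
        (∫ t in (0:ℝ)..T, L t (x t + ε • h t) (deriv x t + ε • deriv h t))
          - G (∫ t in (0:ℝ)..T, α t (x t + ε • h t))) 0 0) :
    ∀ t ∈ Set.Icc (0:ℝ) T,
      deriv (fun s => Lv s (x s) (deriv x s)) t - Lq t (x t) (deriv x t)
        = -(β (∫ τ in (0:ℝ)..T, α τ (x τ))) • αx t (x t) := by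
  have hx1 : ContDiff ℝ 1 x := hx.of_le (by norm_num)
  have hxd : ContDiff ℝ 1 (deriv x) := by
    have h2 : ContDiff ℝ ((1:WithTop ℕ∞)+1) x := by rw [one_add_one_eq_two]; exact hx
    exact (contDiff_succ_iff_deriv.mp h2).2.2
  set P : ℝ → EuclideanSpace ℝ (Fin n) := fun s => MEL.gradv L (s, x s, deriv x s) with hPdef
  have hPeqfun : (fun s => Lv s (x s) (deriv x s)) = P :=
    funext fun s => MEL.gradv_eq L Lv hL hLv s (x s) (deriv x s)
  have hPc : ContDiff ℝ 1 P :=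
    (MEL.contDiff_gradv L hL).comp (contDiff_id.prodMk (hx1.prodMk hxd))
  set Q : ℝ → EuclideanSpace ℝ (Fin n) := fun s => MEL.gradq L (s, x s, deriv x s) with hQdef
  have hQeq : ∀ s, Lq s (x s) (deriv x s) = Q s :=
    fun s => MEL.gradq_eq L Lq hL hLq s (x s) (deriv x s)
  have hQc : Continuous Q :=
    ((MEL.contDiff_gradq L hL).continuous).comp
      (continuous_id.prodMk (hx1.continuous.prodMk hxd.continuous))
  set 𝒦 : ℝ := β (∫ τ in (0:ℝ)..T, α τ (x τ)) with hKdef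
  set Efun : ℝ → EuclideanSpace ℝ (Fin n) :=
    fun s => Q s - deriv P s - 𝒦 • αx s (x s) with hEdef
  have hαxc : Continuous fun s => αx s (x s) :=
    hαxcont.comp (continuous_id.prodMk hx1.continuous)
  have hEc : Continuous Efun :=
    (hQc.sub (hPc.continuous_deriv le_rfl)).sub (hαxc.const_smul 𝒦)
  have hint : ∀ h : ℝ → EuclideanSpace ℝ (Fin n), ContDiff ℝ 2 h → h 0 = 0 → h T = 0 →
      ∫ s in (0:ℝ)..T, ⟪Efun s, h s⟫ = 0 := by
    intro h hh h0 hTz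
    have hhc : Continuous h := hh.continuous
    have hhd : ContDiff ℝ 1 (deriv h) := by
      have h2 : ContDiff ℝ ((1:WithTop ℕ∞)+1) h := by rw [one_add_one_eq_two]; exact hh
      exact (contDiff_succ_iff_deriv.mp h2).2.2
    set g1 : ℝ → ℝ := fun s => ⟪Q s, h s⟫ with hg1def
    set g2 : ℝ → ℝ := fun s => ⟪P s, deriv h s⟫ with hg2def
    set g3 : ℝ → ℝ := fun s => ⟪deriv P s, h s⟫ with hg3def
    set g4 : ℝ → ℝ := fun s => ⟪αx s (x s), h s⟫ with hg4def
    have hg1 : Continuous g1 := hQc.inner hhc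
    have hg2 : Continuous g2 := (hPc.continuous).inner hhd.continuous
    have hg3 : Continuous g3 := (hPc.continuous_deriv le_rfl).inner hhc
    have hg4 : Continuous g4 := hαxc.inner hhc
    have hc1 : Continuous fun p : ℝ × ℝ =>
        ((p.2, x p.2 + p.1 • h p.2, deriv x p.2 + p.1 • deriv h p.2) :
          ℝ × EuclideanSpace ℝ (Fin n) × EuclideanSpace ℝ (Fin n)) := by
      refine continuous_snd.prodMk (Continuous.prodMk ?_ ?_)
      · exact (hx1.continuous.comp continuous_snd).add
          (continuous_fst.smul (hhc.comp continuous_snd))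
      · exact (hxd.continuous.comp continuous_snd).add
          (continuous_fst.smul (hhd.continuous.comp continuous_snd))
    have hc0 : Continuous fun p : ℝ × ℝ =>
        ((p.2, x p.2 + p.1 • h p.2) : ℝ × EuclideanSpace ℝ (Fin n)) :=
      continuous_snd.prodMk ((hx1.continuous.comp continuous_snd).add
        (continuous_fst.smul (hhc.comp continuous_snd)))
    have hFc : Continuous fun p : ℝ × ℝ =>
        L p.2 (x p.2 + p.1 • h p.2) (deriv x p.2 + p.1 • deriv h p.2) :=
      hL.continuous.comp hc1
    have hF'c : Continuous fun p : ℝ × ℝ =>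
        (⟪MEL.gradq L (p.2, x p.2 + p.1 • h p.2, deriv x p.2 + p.1 • deriv h p.2), h p.2⟫
          + ⟪MEL.gradv L (p.2, x p.2 + p.1 • h p.2, deriv x p.2 + p.1 • deriv h p.2),
              deriv h p.2⟫) :=
      ((((MEL.contDiff_gradq L hL).continuous).comp hc1).inner
        (hhc.comp continuous_snd)).add
      ((((MEL.contDiff_gradv L hL).continuous).comp hc1).inner
        (hhd.continuous.comp continuous_snd))
    -- derivative of the Lagrangian part
    have hd1 : HasDerivAt
        (fun ε : ℝ => ∫ s in (0:ℝ)..T, L s (x s + ε • h s) (deriv x s + ε • deriv h s))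
        (∫ s in (0:ℝ)..T, (g1 s + g2 s)) 0 := by
      have key := MEL.param_hasDerivAt (T := T)
        (fun ε s => L s (x s + ε • h s) (deriv x s + ε • deriv h s))
        (fun ε s => ⟪MEL.gradq L (s, x s + ε • h s, deriv x s + ε • deriv h s), h s⟫
          + ⟪MEL.gradv L (s, x s + ε • h s, deriv x s + ε • deriv h s), deriv h s⟫)
        hFc hF'c ?_
      · beta_reduce at key
        have hval : (∫ s in (0:ℝ)..T,
            (⟪MEL.gradq L (s, x s + (0:ℝ) • h s, deriv x s + (0:ℝ) • deriv h s), h s⟫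
            + ⟪MEL.gradv L (s, x s + (0:ℝ) • h s, deriv x s + (0:ℝ) • deriv h s),
                deriv h s⟫))
            = ∫ s in (0:ℝ)..T, (g1 s + g2 s) := by
          refine intervalIntegral.integral_congr fun s _ => ?_
          simp [hg1def, hg2def, hQdef, hPdef]
        rw [hval] at key
        exact key
      · intro ε s
        have hder := MEL.hasDerivAt_L_dir L Lq Lv hL hLq hLv s (x s) (deriv x s)
          (h s) (deriv h s) ε
        rwa [MEL.gradq_eq L Lq hL hLq, MEL.gradv_eq L Lv hL hLv] at hder
    -- derivative of the memory part
    have hαFc : Continuous fun p : ℝ × ℝ => α p.2 (x p.2 + p.1 • h p.2) :=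
      hαcont.comp hc0
    have hαF'c : Continuous fun p : ℝ × ℝ => ⟪αx p.2 (x p.2 + p.1 • h p.2), h p.2⟫ :=
      ((hαxcont.comp hc0).inner (hhc.comp continuous_snd))
    have hd2 : HasDerivAt
        (fun ε : ℝ => ∫ s in (0:ℝ)..T, α s (x s + ε • h s))
        (∫ s in (0:ℝ)..T, g4 s) 0 := by
      have key := MEL.param_hasDerivAt (T := T)
        (fun ε s => α s (x s + ε • h s))
        (fun ε s => ⟪αx s (x s + ε • h s), h s⟫)
        hαFc hαF'c ?_
      · beta_reduce at key
        have hval : (∫ s in (0:ℝ)..T, ⟪αx s (x s + (0:ℝ) • h s), h s⟫)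
            = ∫ s in (0:ℝ)..T, g4 s := by
          refine intervalIntegral.integral_congr fun s _ => ?_
          simp [hg4def]
        rw [hval] at key
        exact key
      · intro ε s
        have hcurve : HasDerivAt (fun e : ℝ => x s + e • h s) (h s) ε := by
          simpa using ((hasDerivAt_id ε).smul_const (h s)).const_add (x s)
        have hres := (hαgrad s (x s + ε • h s)).hasFDerivAt.comp_hasDerivAt ε hcurve
        simp only [InnerProductSpace.toDual_apply_apply] at hres; exact hres
    have hA0 : (∫ s in (0:ℝ)..T, α s (x s + (0:ℝ) • h s))
        = ∫ τ in (0:ℝ)..T, α τ (x τ) :=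
      intervalIntegral.integral_congr fun s _ => by simp
    have hGd : HasDerivAt
        (fun ε : ℝ => G (∫ s in (0:ℝ)..T, α s (x s + ε • h s)))
        (𝒦 * ∫ s in (0:ℝ)..T, g4 s) 0 := by
      have hcomp := (hG (∫ s in (0:ℝ)..T, α s (x s + (0:ℝ) • h s))).comp 0 hd2
      rw [hA0, ← hKdef] at hcomp
      exact hcomp
    have htot := hd1.sub hGd
    have hzero : (∫ s in (0:ℝ)..T, (g1 s + g2 s)) - 𝒦 * ∫ s in (0:ℝ)..T, g4 s = 0 :=
      htot.unique (hcrit h hh h0 hTz)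
    -- integration by parts
    have hprod : ∀ s : ℝ, HasDerivAt (fun u => ⟪P u, h u⟫) (g2 s + g3 s) s := by
      intro s
      exact HasDerivAt.inner ℝ ((hPc.differentiable one_ne_zero s).hasDerivAt)
        ((hh.differentiable (by norm_num) s).hasDerivAt)
    have hibp0 : (∫ s in (0:ℝ)..T, (g2 s + g3 s)) = 0 := by
      rw [intervalIntegral.integral_eq_sub_of_hasDerivAt (fun s _ => hprod s)
        (((hg2.add hg3)).intervalIntegrable _ _)]
      simp [h0, hTz]
    have hi1 : IntervalIntegrable g1 volume 0 T := hg1.intervalIntegrable _ _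
    have hi2 : IntervalIntegrable g2 volume 0 T := hg2.intervalIntegrable _ _
    have hi3 : IntervalIntegrable g3 volume 0 T := hg3.intervalIntegrable _ _
    have hi4 : IntervalIntegrable g4 volume 0 T := hg4.intervalIntegrable _ _
    have hadd23 : (∫ s in (0:ℝ)..T, (g2 s + g3 s))
        = (∫ s in (0:ℝ)..T, g2 s) + ∫ s in (0:ℝ)..T, g3 s :=
      intervalIntegral.integral_add hi2 hi3
    have hadd12 : (∫ s in (0:ℝ)..T, (g1 s + g2 s))
        = (∫ s in (0:ℝ)..T, g1 s) + ∫ s in (0:ℝ)..T, g2 s :=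
      intervalIntegral.integral_add hi1 hi2
    have hEexp : (∫ s in (0:ℝ)..T, ⟪Efun s, h s⟫)
        = (∫ s in (0:ℝ)..T, g1 s) - (∫ s in (0:ℝ)..T, g3 s)
          - 𝒦 * ∫ s in (0:ℝ)..T, g4 s := by
      have hptw : ∀ s, ⟪Efun s, h s⟫ = g1 s - g3 s - 𝒦 * g4 s := by
        intro s
        rw [hEdef]
        simp only [inner_sub_left, real_inner_smul_left]
        rfl
      rw [intervalIntegral.integral_congr (fun s _ => hptw s)]
      rw [intervalIntegral.integral_sub (hi1.sub hi3) (hi4.const_mul 𝒦),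
        intervalIntegral.integral_sub hi1 hi3,
        intervalIntegral.integral_const_mul]
    rw [hEexp]
    rw [hadd12] at hzero
    rw [hadd23] at hibp0
    linarith
  have hEzero := MEL.fund_lemma hT Efun hEc hint
  intro t ht
  rw [hPeqfun]
  have hE := hEzero t ht
  rw [hEdef] at hE
  have hab : Lq t (x t) (deriv x t) - deriv P t = 𝒦 • αx t (x t) := by
    rw [hQeq t]
    exact sub_eq_zero.mp (by simpa [sub_sub] using hE)
  calc deriv P t - Lq t (x t) (deriv x t)
      = -(Lq t (x t) (deriv x t) - deriv P t) := by rw [neg_sub]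
    _ = -(𝒦 • αx t (x t)) := by rw [hab]
    _ = -𝒦 • αx t (x t) := (neg_smul 𝒦 _).symm
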